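/- For a compact quasihypermetric space (X, d), the following are equivalent: (1) M(X) < ∞; (2) there exists a sequence μ_n in M₁(X) with I(μ_n) → M(X); (3) there exists a d-invariant sequence in M₁(X) (a Cauchy sequence μ_n in the energy seminorm with d_{μ_n} converging uniformly to a constant function). -/

import Mathlib

open MeasureTheory

/-- Integral of a function against a finite signed Borel measure, via Jordan decomposition. -/
noncomputable def sInt {X : Type*} [MeasurableSpace X] (μ : SignedMeasure X) (f : X → ℝ) : ℝ :=
  (∫ x, f x ∂μ.toJordanDecomposition.posPart) - ∫ x, f x ∂μ.toJordanDecomposition.negPart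

/-- Energy `I(μ, ν) = ∫∫ d(x,y) dμ(x) dν(y)` with respect to a kernel `d`. -/
noncomputable def en {X : Type*} [MeasurableSpace X] (d : X → X → ℝ)
    (μ ν : SignedMeasure X) : ℝ :=
  sInt μ (fun x => sInt ν (fun y => d x y))

/-- The potential `d_μ(x) = ∫ d(x,y) dμ(y)`. -/
noncomputable def dPot {X : Type*} [MeasurableSpace X] (d : X → X → ℝ)
    (μ : SignedMeasure X) (x : X) : ℝ :=
  sInt μ (fun y => d x y)

/-- The set of energies `I(μ)` of signed Borel measures of total mass one. -/
noncomputable def MSet (X : Type*) [MetricSpace X] [MeasurableSpace X] : Set ℝ :=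
  {r | ∃ μ : SignedMeasure X, μ Set.univ = (1 : ℝ) ∧ en (fun x y => dist x y) μ μ = r}

section Aux

variable {X : Type*} [MetricSpace X] [CompactSpace X] [MeasurableSpace X] [BorelSpace X]

lemma cont_integrable {Y : Type*} [TopologicalSpace Y] [CompactSpace Y] [MeasurableSpace Y]
    [OpensMeasurableSpace Y] (f : Y → ℝ) (hf : Continuous f) (a : Measure Y)
    [IsFiniteMeasure a] : Integrable f a :=
  hf.integrable_of_hasCompactSupport (HasCompactSupport.of_compactSpace f)

lemma sm_apply (μ : SignedMeasure X) {s : Set X} (hs : MeasurableSet s) :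
    μ s = (μ.toJordanDecomposition.posPart s).toReal
      - (μ.toJordanDecomposition.negPart s).toReal := by
  conv_lhs => rw [← μ.toSignedMeasure_toJordanDecomposition]
  rw [JordanDecomposition.toSignedMeasure, VectorMeasure.sub_apply,
    Measure.toSignedMeasure_apply_measurable hs, Measure.toSignedMeasure_apply_measurable hs]
  rfl

lemma sInt_eq (μ : SignedMeasure X) (a b : Measure X) [IsFiniteMeasure a] [IsFiniteMeasure b]
    (h : ∀ s : Set X, MeasurableSet s → μ s = (a s).toReal - (b s).toReal)
    (f : X → ℝ) (hf : Continuous f) :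
    sInt μ f = (∫ x, f x ∂a) - ∫ x, f x ∂b := by
  set p := μ.toJordanDecomposition.posPart with hp
  set n := μ.toJordanDecomposition.negPart with hn
  have hmeas : a + n = b + p := by
    ext s hs
    have h1 := h s hs
    have h2 := sm_apply μ hs
    rw [← hp, ← hn] at h2
    have h3 : (a s).toReal + (n s).toReal = (b s).toReal + (p s).toReal := by linarith
    have h4 : ((a + n) s).toReal = ((b + p) s).toReal := by
      simp only [Measure.add_apply]
      rw [ENNReal.toReal_add (measure_ne_top a s) (measure_ne_top n s),
        ENNReal.toReal_add (measure_ne_top b s) (measure_ne_top p s)]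
      exact h3
    exact (ENNReal.toReal_eq_toReal_iff' (by finiteness) (by finiteness)).mp h4
  have key : (∫ x, f x ∂a) + ∫ x, f x ∂n = (∫ x, f x ∂b) + ∫ x, f x ∂p := by
    rw [← integral_add_measure (cont_integrable f hf a) (cont_integrable f hf n),
      ← integral_add_measure (cont_integrable f hf b) (cont_integrable f hf p), hmeas]
  rw [sInt, ← hp, ← hn]
  linarith

lemma sInt_add (μ ν : SignedMeasure X) (f : X → ℝ) (hf : Continuous f) :
    sInt (μ + ν) f = sInt μ f + sInt ν f := by
  rw [sInt_eq (μ + ν) (μ.toJordanDecomposition.posPart + ν.toJordanDecomposition.posPart)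
      (μ.toJordanDecomposition.negPart + ν.toJordanDecomposition.negPart) ?_ f hf]
  · rw [integral_add_measure (cont_integrable f hf _) (cont_integrable f hf _),
      integral_add_measure (cont_integrable f hf _) (cont_integrable f hf _)]
    simp [sInt]; ring
  · intro s hs
    rw [VectorMeasure.add_apply, sm_apply μ hs, sm_apply ν hs, Measure.add_apply,
      Measure.add_apply, ENNReal.toReal_add (measure_ne_top _ s) (measure_ne_top _ s),
      ENNReal.toReal_add (measure_ne_top _ s) (measure_ne_top _ s)]
    ring

lemma sInt_neg (μ : SignedMeasure X) (f : X → ℝ) (hf : Continuous f) :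
    sInt (-μ) f = -sInt μ f := by
  rw [sInt_eq (-μ) μ.toJordanDecomposition.negPart μ.toJordanDecomposition.posPart ?_ f hf]
  · rw [sInt]; ring
  · intro s hs
    rw [VectorMeasure.neg_apply, sm_apply μ hs]; ring

instance smul_finite (r : ℝ) (a : Measure X) [IsFiniteMeasure a] :
    IsFiniteMeasure (ENNReal.ofReal r • a) :=
  ⟨by rw [Measure.smul_apply, smul_eq_mul]
      exact ENNReal.mul_lt_top ENNReal.ofReal_lt_top (measure_lt_top a _)⟩

lemma sInt_smul_nonneg {r : ℝ} (hr : 0 ≤ r) (μ : SignedMeasure X) (f : X → ℝ)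
    (hf : Continuous f) : sInt (r • μ) f = r * sInt μ f := by
  rw [sInt_eq (r • μ) (ENNReal.ofReal r • μ.toJordanDecomposition.posPart)
      (ENNReal.ofReal r • μ.toJordanDecomposition.negPart) ?_ f hf]
  · rw [integral_smul_measure, integral_smul_measure, ENNReal.toReal_ofReal hr, sInt]
    simp [smul_eq_mul]; ring
  · intro s hs
    simp only [VectorMeasure.smul_apply, Measure.smul_apply, smul_eq_mul,
      ENNReal.toReal_mul, ENNReal.toReal_ofReal hr, sm_apply μ hs]
    ring

lemma sInt_smul (r : ℝ) (μ : SignedMeasure X) (f : X → ℝ) (hf : Continuous f) :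
    sInt (r • μ) f = r * sInt μ f := by
  rcases le_or_gt 0 r with hr | hr
  · exact sInt_smul_nonneg hr μ f hf
  · have h1 : r • μ = -((-r) • μ) := by ext s hs; simp
    rw [h1, sInt_neg _ f hf, sInt_smul_nonneg (by linarith : (0:ℝ) ≤ -r) μ f hf]
    ring

lemma sInt_sub (μ ν : SignedMeasure X) (f : X → ℝ) (hf : Continuous f) :
    sInt (μ - ν) f = sInt μ f - sInt ν f := by
  rw [sub_eq_add_neg, sInt_add μ (-ν) f hf, sInt_neg ν f hf]; ring

lemma sInt_const (μ : SignedMeasure X) (c : ℝ) :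
    sInt μ (fun _ => c) = c * μ Set.univ := by
  rw [sInt, integral_const, integral_const, sm_apply μ MeasurableSet.univ]
  simp [smul_eq_mul, Measure.real]; ring

lemma sInt_fun_add (μ : SignedMeasure X) (f g : X → ℝ) (hf : Continuous f) (hg : Continuous g) :
    sInt μ (fun x => f x + g x) = sInt μ f + sInt μ g := by
  rw [sInt, sInt, sInt, integral_add (cont_integrable f hf _) (cont_integrable g hg _),
    integral_add (cont_integrable f hf _) (cont_integrable g hg _)]
  ring

lemma sInt_fun_smul (μ : SignedMeasure X) (f : X → ℝ) (r : ℝ) :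
    sInt μ (fun x => r * f x) = r * sInt μ f := by
  rw [sInt, sInt, integral_const_mul, integral_const_mul]; ring

lemma abs_sInt_le (μ : SignedMeasure X) (f : X → ℝ) {C : ℝ} (hC : ∀ x, |f x| ≤ C) :
    |sInt μ f| ≤ C * ((μ.toJordanDecomposition.posPart Set.univ).toReal
      + (μ.toJordanDecomposition.negPart Set.univ).toReal) := by
  have h1 := norm_integral_le_of_norm_le_const (μ := μ.toJordanDecomposition.posPart)
    (f := f) (C := C) (Filter.Eventually.of_forall (fun x => hC x))
  have h2 := norm_integral_le_of_norm_le_const (μ := μ.toJordanDecomposition.negPart)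
    (f := f) (C := C) (Filter.Eventually.of_forall (fun x => hC x))
  rw [sInt]
  calc |(∫ x, f x ∂μ.toJordanDecomposition.posPart) - ∫ x, f x ∂μ.toJordanDecomposition.negPart|
      ≤ |∫ x, f x ∂μ.toJordanDecomposition.posPart|
        + |∫ x, f x ∂μ.toJordanDecomposition.negPart| := abs_sub _ _
    _ ≤ _ := by rw [Real.norm_eq_abs] at h1 h2; simp only [Measure.real] at h1 h2; linarith

noncomputable def sDirac (x : X) : SignedMeasure X := (Measure.dirac x).toSignedMeasure

lemma sDirac_univ (x : X) : sDirac x Set.univ = 1 := by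
  rw [sDirac, Measure.toSignedMeasure_apply_measurable MeasurableSet.univ]
  simp

lemma sInt_sDirac (x : X) (f : X → ℝ) (hf : Continuous f) : sInt (sDirac x) f = f x := by
  rw [sInt_eq (sDirac x) (Measure.dirac x) 0 ?_ f hf]
  · rw [integral_zero_measure, integral_dirac' f x hf.stronglyMeasurable, sub_zero]
  · intro s hs
    rw [sDirac, Measure.toSignedMeasure_apply_measurable hs]
    simp [Measure.real, hs]

lemma cont_int_dist (a : Measure X) [IsFiniteMeasure a] :
    Continuous (fun x => ∫ y, dist x y ∂a) := by
  have key : ∀ x x' : X, |(∫ y, dist x y ∂a) - ∫ y, dist x' y ∂a|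
      ≤ dist x x' * (a Set.univ).toReal := by
    intro x x'
    have i1 : Integrable (fun y => dist x y) a :=
      cont_integrable _ (continuous_const.dist continuous_id) a
    have i2 : Integrable (fun y => dist x' y) a :=
      cont_integrable _ (continuous_const.dist continuous_id) a
    rw [← integral_sub i1 i2]
    have := norm_integral_le_of_norm_le_const (μ := a) (f := fun y => dist x y - dist x' y)
      (C := dist x x') (Filter.Eventually.of_forall (fun y => by
        rw [Real.norm_eq_abs]; exact abs_dist_sub_le x x' y))
    rwa [Real.norm_eq_abs] at this
  rw [Metric.continuous_iff]
  intro x ε hε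
  rcases le_or_gt (a Set.univ).toReal 0 with hA | hA
  · exact ⟨1, one_pos, fun x' _ => by
      have h1 := key x' x
      have h2 : dist x' x * (a Set.univ).toReal ≤ 0 :=
        mul_nonpos_of_nonneg_of_nonpos dist_nonneg hA
      rw [Real.dist_eq]
      have := abs_nonneg ((∫ y, dist x' y ∂a) - ∫ y, dist x y ∂a)
      linarith⟩
  · refine ⟨ε / (a Set.univ).toReal, div_pos hε hA, fun x' hx' => by
      have h1 := key x' x
      rw [Real.dist_eq]
      calc |(∫ y, dist x' y ∂a) - ∫ y, dist x y ∂a| ≤ dist x' x * (a Set.univ).toReal := h1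
        _ < (ε / (a Set.univ).toReal) * (a Set.univ).toReal := by
            exact mul_lt_mul_of_pos_right hx' hA
        _ = ε := div_mul_cancel₀ ε (ne_of_gt hA)⟩

lemma dPot_eq (ν : SignedMeasure X) (x : X) :
    dPot (fun x y => dist x y) ν x = (∫ y, dist x y ∂ν.toJordanDecomposition.posPart)
      - ∫ y, dist x y ∂ν.toJordanDecomposition.negPart := rfl

lemma dPot_cont (ν : SignedMeasure X) : Continuous (dPot (fun x y => dist x y) ν) := by
  have : dPot (fun x y => dist x y) ν = fun x =>
      (∫ y, dist x y ∂ν.toJordanDecomposition.posPart)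
      - ∫ y, dist x y ∂ν.toJordanDecomposition.negPart := rfl
  rw [this]
  exact (cont_int_dist _).sub (cont_int_dist _)

lemma en_eq (μ ν : SignedMeasure X) :
    en (fun x y => dist x y) μ ν = sInt μ (dPot (fun x y => dist x y) ν) := rfl

lemma en_add_left (μ ν ρ : SignedMeasure X) :
    en (fun x y => dist x y) (μ + ν) ρ
      = en (fun x y => dist x y) μ ρ + en (fun x y => dist x y) ν ρ :=
  sInt_add μ ν _ (dPot_cont ρ)

lemma en_smul_left (r : ℝ) (μ ρ : SignedMeasure X) :
    en (fun x y => dist x y) (r • μ) ρ = r * en (fun x y => dist x y) μ ρ :=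
  sInt_smul r μ _ (dPot_cont ρ)

lemma en_sub_left (μ ν ρ : SignedMeasure X) :
    en (fun x y => dist x y) (μ - ν) ρ
      = en (fun x y => dist x y) μ ρ - en (fun x y => dist x y) ν ρ :=
  sInt_sub μ ν _ (dPot_cont ρ)

lemma en_add_right (ρ μ ν : SignedMeasure X) :
    en (fun x y => dist x y) ρ (μ + ν)
      = en (fun x y => dist x y) ρ μ + en (fun x y => dist x y) ρ ν := by
  have h1 : (fun x => sInt (μ + ν) (fun y => dist x y))
      = fun x => sInt μ (fun y => dist x y) + sInt ν (fun y => dist x y) :=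
    funext fun x => sInt_add μ ν _ (continuous_const.dist continuous_id)
  rw [en, h1,
    show (fun x => (sInt μ fun y => dist x y) + sInt ν fun y => dist x y)
      = fun x => dPot (fun x y => dist x y) μ x + dPot (fun x y => dist x y) ν x from rfl,
    sInt_fun_add ρ _ _ (dPot_cont μ) (dPot_cont ν)]
  rfl

lemma en_smul_right (r : ℝ) (ρ μ : SignedMeasure X) :
    en (fun x y => dist x y) ρ (r • μ) = r * en (fun x y => dist x y) ρ μ := by
  have h1 : (fun x => sInt (r • μ) (fun y => dist x y))
      = fun x => r * sInt μ (fun y => dist x y) :=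
    funext fun x => sInt_smul r μ _ (continuous_const.dist continuous_id)
  rw [en, h1, sInt_fun_smul ρ _ r]
  rfl

lemma en_sub_right (ρ μ ν : SignedMeasure X) :
    en (fun x y => dist x y) ρ (μ - ν)
      = en (fun x y => dist x y) ρ μ - en (fun x y => dist x y) ρ ν := by
  have h1 : (fun x => sInt (μ - ν) (fun y => dist x y))
      = fun x => sInt μ (fun y => dist x y) - sInt ν (fun y => dist x y) :=
    funext fun x => sInt_sub μ ν _ (continuous_const.dist continuous_id)
  rw [en, h1]
  have h2 : (fun x => sInt μ (fun y => dist x y) - sInt ν (fun y => dist x y))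
      = fun x => dPot (fun x y => dist x y) μ x + (-1) * dPot (fun x y => dist x y) ν x := by
    funext x; rw [dPot, dPot]; ring
  rw [h2, sInt_fun_add ρ _ (fun x => (-1) * dPot (fun x y => dist x y) ν x) (dPot_cont μ) (continuous_const.mul (dPot_cont ν)),
    sInt_fun_smul ρ _ (-1 : ℝ)]
  rw [en_eq, en_eq]; ring

lemma double_swap (a b : Measure X) [IsFiniteMeasure a] [IsFiniteMeasure b] :
    (∫ x, ∫ y, dist x y ∂b ∂a) = ∫ x, ∫ y, dist x y ∂a ∂b := by
  rw [MeasureTheory.integral_integral_swap]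
  · simp_rw [dist_comm]
  · exact cont_integrable _ (continuous_dist) (a.prod b)

lemma en_symm (μ ν : SignedMeasure X) :
    en (fun x y => dist x y) μ ν = en (fun x y => dist x y) ν μ := by
  set p1 := μ.toJordanDecomposition.posPart
  set n1 := μ.toJordanDecomposition.negPart
  set p2 := ν.toJordanDecomposition.posPart
  set n2 := ν.toJordanDecomposition.negPart
  have expand : ∀ (σ τ : SignedMeasure X),
      en (fun x y => dist x y) σ τ
        = ((∫ x, ∫ y, dist x y ∂τ.toJordanDecomposition.posPart ∂σ.toJordanDecomposition.posPart)
          - ∫ x, ∫ y, dist x y ∂τ.toJordanDecomposition.negPart ∂σ.toJordanDecomposition.posPart)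
          - ((∫ x, ∫ y, dist x y ∂τ.toJordanDecomposition.posPart ∂σ.toJordanDecomposition.negPart)
          - ∫ x, ∫ y, dist x y ∂τ.toJordanDecomposition.negPart ∂σ.toJordanDecomposition.negPart) := by
    intro σ τ
    rw [en_eq, sInt]
    have hrw : ∀ (c : Measure X), [IsFiniteMeasure c] →
        (∫ x, dPot (fun x y => dist x y) τ x ∂c)
          = (∫ x, ∫ y, dist x y ∂τ.toJordanDecomposition.posPart ∂c)
            - ∫ x, ∫ y, dist x y ∂τ.toJordanDecomposition.negPart ∂c := by
      intro c hc
      simp_rw [dPot_eq]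
      exact integral_sub (cont_integrable _ (cont_int_dist _) c)
        (cont_integrable _ (cont_int_dist _) c)
    rw [hrw σ.toJordanDecomposition.posPart, hrw σ.toJordanDecomposition.negPart]
  rw [expand μ ν, expand ν μ, double_swap p2 p1, double_swap n2 p1, double_swap p2 n1,
    double_swap n2 n1]
  ring

lemma en_expand_smul (μ ν : SignedMeasure X) (t : ℝ) :
    en (fun x y => dist x y) (μ + t • ν) (μ + t • ν)
      = en (fun x y => dist x y) μ μ + 2 * t * en (fun x y => dist x y) μ ν
        + t ^ 2 * en (fun x y => dist x y) ν ν := by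
  rw [en_add_left, en_add_right, en_add_right, en_smul_left, en_smul_left, en_smul_right,
    en_smul_right, en_symm ν μ]
  ring

lemma en_expand_add (μ ν : SignedMeasure X) :
    en (fun x y => dist x y) (μ + ν) (μ + ν)
      = en (fun x y => dist x y) μ μ + 2 * en (fun x y => dist x y) μ ν
        + en (fun x y => dist x y) ν ν := by
  rw [en_add_left, en_add_right, en_add_right, en_symm ν μ]
  ring

lemma en_expand_sub (μ ν : SignedMeasure X) :
    en (fun x y => dist x y) (μ - ν) (μ - ν)
      = en (fun x y => dist x y) μ μ - 2 * en (fun x y => dist x y) μ ν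
        + en (fun x y => dist x y) ν ν := by
  rw [en_sub_left, en_sub_right, en_sub_right, en_symm ν μ]
  ring

lemma quad {a b e : ℝ} (h : ∀ t : ℝ, 2 * t * a + t ^ 2 * b ≤ e) (hb : b ≤ 0) :
    a ^ 2 ≤ (-b) * e := by
  rcases eq_or_lt_of_le hb with hb0 | hb0
  · subst hb0
    have ha : a = 0 := by
      by_contra ha
      have h1 := h ((e + 1) / (2 * a))
      have h2 : 2 * ((e + 1) / (2 * a)) * a = e + 1 := by field_simp
      nlinarith
    subst ha
    simp
  · have hpos : (0:ℝ) < -b := by linarith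
    have hne : -b ≠ 0 := ne_of_gt hpos
    have hbne : b ≠ 0 := fun hb' => hne (by rw [hb']; ring)
    have h1 := h (a / (-b))
    have h2 : 2 * (a / (-b)) * a + (a / (-b)) ^ 2 * b = a ^ 2 / (-b) := by
      field_simp
      ring
    rw [h2, div_le_iff₀ hpos] at h1
    nlinarith

lemma mass_add (μ ν : SignedMeasure X) : (μ + ν) Set.univ = μ Set.univ + ν Set.univ :=
  VectorMeasure.add_apply _ _ _

lemma mass_sub (μ ν : SignedMeasure X) : (μ - ν) Set.univ = μ Set.univ - ν Set.univ :=
  VectorMeasure.sub_apply _ _ _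

lemma mass_smul (r : ℝ) (μ : SignedMeasure X) : (r • μ) Set.univ = r * μ Set.univ := by
  rw [VectorMeasure.smul_apply]; rfl

lemma cauchy_schwarz (hq : ∀ ν : SignedMeasure X, ν Set.univ = (0 : ℝ)
      → en (fun x y => dist x y) ν ν ≤ 0)
    (σ τ : SignedMeasure X) (hσ : σ Set.univ = 0) (hτ : τ Set.univ = 0) :
    en (fun x y => dist x y) σ τ
      ≤ Real.sqrt (-en (fun x y => dist x y) σ σ)
        * Real.sqrt (-en (fun x y => dist x y) τ τ) := by
  have key : ∀ t : ℝ, 2 * t * en (fun x y => dist x y) σ τ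
      + t ^ 2 * en (fun x y => dist x y) τ τ ≤ -en (fun x y => dist x y) σ σ := by
    intro t
    have h1 := hq (σ + t • τ) (by rw [mass_add, mass_smul, hσ, hτ]; ring)
    rw [en_expand_smul] at h1
    linarith
  have h2 := quad key (hq τ hτ)
  have h3 : en (fun x y => dist x y) σ τ ≤ |en (fun x y => dist x y) σ τ| := le_abs_self _
  have h4 : |en (fun x y => dist x y) σ τ|
      = Real.sqrt ((en (fun x y => dist x y) σ τ) ^ 2) := (Real.sqrt_sq_eq_abs _).symm
  have h5 : Real.sqrt ((en (fun x y => dist x y) σ τ) ^ 2)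
      ≤ Real.sqrt ((-en (fun x y => dist x y) τ τ) * (-en (fun x y => dist x y) σ σ)) := by
    apply Real.sqrt_le_sqrt
    have := quad key (hq τ hτ)
    linarith [this]
  calc en (fun x y => dist x y) σ τ ≤ Real.sqrt ((en (fun x y => dist x y) σ τ) ^ 2) := by
        rw [← h4]; exact h3
    _ ≤ Real.sqrt ((-en (fun x y => dist x y) τ τ) * (-en (fun x y => dist x y) σ σ)) := h5
    _ = Real.sqrt (-en (fun x y => dist x y) σ σ)
        * Real.sqrt (-en (fun x y => dist x y) τ τ) := by
        rw [Real.sqrt_mul (by linarith [hq τ hτ] : (0:ℝ) ≤ -en (fun x y => dist x y) τ τ),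
          mul_comm]

lemma exists_seq {m : ℝ} (h : IsLUB (MSet X) m) :
    ∃ μ : ℕ → SignedMeasure X, (∀ n, (μ n) Set.univ = (1 : ℝ)) ∧
      ∀ n : ℕ, m - 1 / (n + 1) < en (fun x y => dist x y) (μ n) (μ n) ∧
        en (fun x y => dist x y) (μ n) (μ n) ≤ m := by
  have hne : (MSet X).Nonempty := by
    by_contra hne
    rw [Set.not_nonempty_iff_eq_empty] at hne
    have h1 : (m - 1) ∈ upperBounds (MSet X) := by
      rw [hne]; intro r hr; exact absurd hr (Set.notMem_empty r)
    have := h.2 h1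
    linarith
  have key : ∀ n : ℕ, ∃ ν : SignedMeasure X, ν Set.univ = (1:ℝ) ∧
      m - 1 / (n + 1) < en (fun x y => dist x y) ν ν ∧
        en (fun x y => dist x y) ν ν ≤ m := by
    intro n
    have hlt : m - 1 / (n + 1) < m := by
      have : (0:ℝ) < 1 / (n + 1) := by positivity
      linarith
    obtain ⟨r, hr, hr2, hr3⟩ := h.exists_between hlt
    obtain ⟨ν, hν1, hν2⟩ := hr
    exact ⟨ν, hν1, by rw [hν2]; exact hr2, by rw [hν2]; exact hr3⟩
  choose μ h1 h2 h3 using key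
  exact ⟨μ, h1, fun n => ⟨h2 n, h3 n⟩⟩

end Aux

set_option maxHeartbeats 1000000 in
theorem stmt14 {X : Type*} [MetricSpace X] [CompactSpace X] [MeasurableSpace X] [BorelSpace X]
    (hq : ∀ ν : SignedMeasure X, ν Set.univ = (0 : ℝ) → en (fun x y => dist x y) ν ν ≤ 0) :
    ((∃ m : ℝ, IsLUB (MSet X) m) ↔
        (∃ m : ℝ, IsLUB (MSet X) m ∧
          ∃ μ : ℕ → SignedMeasure X, (∀ n, (μ n) Set.univ = (1 : ℝ)) ∧
            Filter.Tendsto (fun n => en (fun x y => dist x y) (μ n) (μ n))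
              Filter.atTop (nhds m))) ∧
      ((∃ m : ℝ, IsLUB (MSet X) m) ↔
        (∃ μ : ℕ → SignedMeasure X, (∀ n, (μ n) Set.univ = (1 : ℝ)) ∧
          (∀ ε > (0 : ℝ), ∃ N : ℕ, ∀ p ≥ N, ∀ q ≥ N,
            Real.sqrt (-(en (fun x y => dist x y) (μ p - μ q) (μ p - μ q))) < ε) ∧
          ∃ c : ℝ, TendstoUniformly (fun n x => dPot (fun x y => dist x y) (μ n) x)
            (fun _ => c) Filter.atTop)) := by
  constructor
  · constructor
    · rintro ⟨m, hm⟩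
      obtain ⟨μ, hmass, hseq⟩ := exists_seq hm
      refine ⟨m, hm, μ, hmass, ?_⟩
      have hlow : Filter.Tendsto (fun n : ℕ => m - 1 / ((n : ℝ) + 1)) Filter.atTop (nhds m) := by
        have h2 := Filter.Tendsto.sub (tendsto_const_nhds (x := m) (f := Filter.atTop (α := ℕ)))
          tendsto_one_div_add_atTop_nhds_zero_nat
        simpa using h2
      exact tendsto_of_tendsto_of_tendsto_of_le_of_le hlow tendsto_const_nhds
        (fun n => le_of_lt (hseq n).1) (fun n => (hseq n).2)
    · rintro ⟨m, hm, _⟩; exact ⟨m, hm⟩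
  constructor
  · rintro ⟨m, hm⟩
    obtain ⟨μ, hmass, hseq⟩ := exists_seq hm
    have hub : ∀ ν : SignedMeasure X, ν Set.univ = (1 : ℝ)
        → en (fun x y => dist x y) ν ν ≤ m := fun ν hν => hm.1 ⟨ν, hν, rfl⟩
    have hXne : Nonempty X := by
      by_contra hx
      rw [not_nonempty_iff] at hx
      have h0 : (Set.univ : Set X) = ∅ := Set.univ_eq_empty_iff.mpr hx
      have h1 := hmass 0
      rw [h0] at h1
      simp at h1
    have hdirac0 : ∀ x : X, en (fun x y => dist x y) (sDirac x) (sDirac x) = 0 := by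
      intro x
      rw [en_eq, sInt_sDirac x _ (dPot_cont _), dPot,
        sInt_sDirac x (fun y => dist x y) (continuous_const.dist continuous_id)]
      simp
    have hm0 : 0 ≤ m := by
      obtain ⟨x⟩ := hXne
      have := hub (sDirac x) (sDirac_univ x)
      rw [hdirac0 x] at this
      linarith
    refine ⟨μ, hmass, ?_, m, ?_⟩
    · -- Cauchy in the energy seminorm
      intro ε hε
      obtain ⟨N, hN⟩ := exists_nat_gt (4 / ε ^ 2)
      refine ⟨N, fun p hp q hq => ?_⟩
      have hNpos : (0:ℝ) < (N:ℝ) + 1 := by positivity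
      have key : -(en (fun x y => dist x y) (μ p - μ q) (μ p - μ q)) < ε ^ 2 := by
        have h1 := hub ((1/2 : ℝ) • (μ p + μ q))
          (by rw [mass_smul, mass_add, hmass, hmass]; norm_num)
        rw [en_smul_left, en_smul_right, en_expand_add] at h1
        rw [en_expand_sub]
        have h2 := (hseq p).1
        have h3 := (hseq q).1
        have h4 : (1:ℝ) / ((p:ℝ)+1) ≤ 1 / ((N:ℝ)+1) := by
          apply one_div_le_one_div_of_le hNpos
          have : (N:ℝ) ≤ p := Nat.cast_le.mpr hp
          linarith
        have h5 : (1:ℝ) / ((q:ℝ)+1) ≤ 1 / ((N:ℝ)+1) := by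
          apply one_div_le_one_div_of_le hNpos
          have : (N:ℝ) ≤ q := Nat.cast_le.mpr hq
          linarith
        have h6 : 4 * ((1:ℝ) / ((N:ℝ)+1)) < ε ^ 2 := by
          rw [mul_one_div, div_lt_iff₀ hNpos]
          rw [div_lt_iff₀ (by positivity : (0:ℝ) < ε ^ 2)] at hN
          nlinarith
        linarith
      exact (Real.sqrt_lt' hε).mpr key
    · -- uniform convergence of potentials to the constant m
      rw [Metric.tendstoUniformly_iff]
      intro ε hε
      obtain ⟨N, hN⟩ := exists_nat_gt (m / ε ^ 2)
      rw [Filter.eventually_atTop]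
      refine ⟨N, fun n hn x => ?_⟩
      have hIn1 := (hseq n).1
      have hIn2 := (hseq n).2
      set In := en (fun x y => dist x y) (μ n) (μ n) with hIndef
      set e := m - In with hedef
      have he0 : 0 ≤ e := by simp only [hedef]; linarith
      set σ := sDirac x - μ n with hσdef
      clear_value σ
      have hσ0 : σ Set.univ = 0 := by
        rw [hσdef, mass_sub, sDirac_univ, hmass]; ring
      have hb := hq σ hσ0
      set a := dPot (fun x y => dist x y) (μ n) x - In with hadef
      have hBa : en (fun x y => dist x y) (μ n) σ = a := by
        rw [hσdef, en_sub_right, en_symm (μ n) (sDirac x), en_eq,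
          sInt_sDirac x _ (dPot_cont _), hadef]
      have key : ∀ t : ℝ, 2 * t * en (fun x y => dist x y) (μ n) σ
          + t ^ 2 * en (fun x y => dist x y) σ σ ≤ e := by
        intro t
        have h1 := hub (μ n + t • σ) (by rw [mass_add, mass_smul, hσ0, hmass]; ring)
        rw [en_expand_smul] at h1
        simp only [hedef]
        linarith
      have h2 := quad key hb
      have hval : en (fun x y => dist x y) (sDirac x) (μ n)
          = dPot (fun x y => dist x y) (μ n) x := by
        rw [en_eq]
        exact sInt_sDirac x _ (dPot_cont _)
      have hσσ : en (fun x y => dist x y) σ σ = -(2 * a + In) := by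
        rw [hσdef, en_expand_sub, hdirac0 x, hval, hadef, ← hIndef]
        ring
      rw [hBa, hσσ] at h2
      clear_value In e a
      -- h2 : a ^ 2 ≤ (2 * a + In) * e ; hence (a - e)^2 ≤ e * m
      have hem : e * m = In * e + e ^ 2 := by rw [hedef]; ring
      have h3 : (a - e) ^ 2 ≤ e * m := by nlinarith [h2, hem]
      have h4 : e * m < ε ^ 2 := by
        have h5 : e ≤ 1 / ((n:ℝ) + 1) := by simp only [hedef]; linarith
        have h6 : (1:ℝ) / ((n:ℝ)+1) ≤ 1 / ((N:ℝ)+1) := by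
          apply one_div_le_one_div_of_le (by positivity)
          have : (N:ℝ) ≤ n := Nat.cast_le.mpr hn
          linarith
        have h7 : m / ((N:ℝ)+1) < ε ^ 2 := by
          rw [div_lt_iff₀ (by positivity : (0:ℝ) < (N:ℝ)+1)]
          rw [div_lt_iff₀ (by positivity : (0:ℝ) < ε ^ 2)] at hN
          nlinarith
        have h8 : e * m ≤ m / ((N:ℝ)+1) := by
          calc e * m ≤ (1 / ((N:ℝ)+1)) * m := by
                apply mul_le_mul_of_nonneg_right _ hm0
                linarith
            _ = m / ((N:ℝ)+1) := by ring
        linarith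
      have h9 : dist m (dPot (fun x y => dist x y) (μ n) x) = |a - e| := by
        rw [Real.dist_eq]
        have : m - dPot (fun x y => dist x y) (μ n) x = e - a := by
          simp only [hadef, hedef]; ring
        rw [this, abs_sub_comm]
      rw [h9]
      nlinarith [sq_abs (a - e), abs_nonneg (a - e), h3, h4]
  · rintro ⟨μ, hmass, hcau, c, hU⟩
    have hne : (MSet X).Nonempty :=
      ⟨en (fun x y => dist x y) (μ 0) (μ 0), μ 0, hmass 0, rfl⟩
    obtain ⟨N, hN⟩ := hcau 1 one_pos
    have hbdd : ∀ r ∈ MSet X, r ≤ en (fun x y => dist x y) (μ N) (μ N) + 1 := by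
      rintro r ⟨ν, hν, rfl⟩
      set σ := ν - μ N with hσdef
      clear_value σ
      have hσ0 : σ Set.univ = 0 := by rw [hσdef, mass_sub, hν, hmass]; ring
      have hdecomp : en (fun x y => dist x y) ν ν
          = en (fun x y => dist x y) (μ N) (μ N)
            + 2 * en (fun x y => dist x y) σ (μ N) + en (fun x y => dist x y) σ σ := by
        have hν' : ν = μ N + σ := by rw [hσdef]; abel
        nth_rewrite 1 [hν', hν']
        rw [en_expand_add, en_symm (μ N) σ]
      have hkey : en (fun x y => dist x y) σ (μ N)
          ≤ Real.sqrt (-(en (fun x y => dist x y) σ σ)) := by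
        apply le_of_forall_pos_le_add
        intro γ hγ
        set V := (σ.toJordanDecomposition.posPart Set.univ).toReal
          + (σ.toJordanDecomposition.negPart Set.univ).toReal with hVdef
        clear_value V
        have hV0 : 0 ≤ V := by
          rw [hVdef]
          exact add_nonneg ENNReal.toReal_nonneg ENNReal.toReal_nonneg
        rw [Metric.tendstoUniformly_iff] at hU
        obtain ⟨M0, hM0⟩ := (Filter.eventually_atTop).mp (hU (γ / (V + 1)) (by positivity))
        set m' := max N M0 with hm'def
        clear_value m'
        have hsplit : en (fun x y => dist x y) σ (μ N)
            = en (fun x y => dist x y) σ (μ N - μ m')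
              + en (fun x y => dist x y) σ (μ m') := by
          rw [← en_add_right]
          congr 1
          abel
        have hτ0 : (μ N - μ m') Set.univ = 0 := by rw [mass_sub, hmass, hmass]; ring
        have hCS := cauchy_schwarz hq σ (μ N - μ m') hσ0 hτ0
        have hsq : Real.sqrt (-(en (fun x y => dist x y) (μ N - μ m') (μ N - μ m'))) < 1 :=
          hN N le_rfl m' (by rw [hm'def]; exact le_max_left N M0)
        have h1 : en (fun x y => dist x y) σ (μ N - μ m')
            ≤ Real.sqrt (-(en (fun x y => dist x y) σ σ)) := by
          calc en (fun x y => dist x y) σ (μ N - μ m')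
              ≤ Real.sqrt (-(en (fun x y => dist x y) σ σ))
                * Real.sqrt (-(en (fun x y => dist x y) (μ N - μ m') (μ N - μ m'))) := hCS
            _ ≤ Real.sqrt (-(en (fun x y => dist x y) σ σ)) * 1 :=
                mul_le_mul_of_nonneg_left (le_of_lt hsq) (Real.sqrt_nonneg _)
            _ = Real.sqrt (-(en (fun x y => dist x y) σ σ)) := mul_one _
        have h2 : en (fun x y => dist x y) σ (μ m') ≤ γ := by
          have hrw : en (fun x y => dist x y) σ (μ m')
              = sInt σ (fun x => dPot (fun x y => dist x y) (μ m') x - c) := by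
            calc en (fun x y => dist x y) σ (μ m')
                = sInt σ (fun x => (dPot (fun x y => dist x y) (μ m') x - c) + c) := by
                  rw [en_eq]; congr 1; funext x; ring
              _ = sInt σ (fun x => dPot (fun x y => dist x y) (μ m') x - c)
                  + c * (σ Set.univ) := by
                  rw [sInt_fun_add σ (fun x => dPot (fun x y => dist x y) (μ m') x - c) _ ((dPot_cont (μ m')).sub continuous_const)
                    continuous_const, sInt_const]
              _ = sInt σ (fun x => dPot (fun x y => dist x y) (μ m') x - c) := by
                  rw [hσ0]; ring
          rw [hrw]
          have hbound : ∀ x : X, |dPot (fun x y => dist x y) (μ m') x - c| ≤ γ / (V + 1) := by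
            intro x
            have := hM0 m' (by rw [hm'def]; exact le_max_right N M0) x
            rw [Real.dist_eq, abs_sub_comm] at this
            exact le_of_lt this
          have habs := abs_sInt_le σ _ hbound
          rw [← hVdef] at habs
          have h3 : γ / (V + 1) * V ≤ γ := by
            rw [div_mul_eq_mul_div, div_le_iff₀ (by positivity : (0:ℝ) < V + 1)]
            nlinarith
          calc sInt σ (fun x => dPot (fun x y => dist x y) (μ m') x - c)
              ≤ |sInt σ (fun x => dPot (fun x y => dist x y) (μ m') x - c)| := le_abs_self _
            _ ≤ γ / (V + 1) * V := habs
            _ ≤ γ := h3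
        linarith [hsplit, h1, h2]
      have hs := Real.sq_sqrt (by linarith [hq σ hσ0] : 0 ≤ -(en (fun x y => dist x y) σ σ))
      set s := Real.sqrt (-(en (fun x y => dist x y) σ σ)) with hsdef
      nlinarith [hdecomp, hkey, hs, sq_nonneg (s - 1)]
    exact ⟨sSup (MSet X), isLUB_csSup hne ⟨_, hbdd⟩⟩
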